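/- Dichotomy theorem for abelian semigroup actions: let (T,X) be a syndetically transitive topological semiflow on a compact Hausdorff space X with T an abelian topological monoid. Then (T,X) is either minimal and equicontinuous, or sensitive to initial conditions. -/

import Mathlib

open Filter Topology Set Uniformity

/-- A subset `B` of a topological monoid `T` is *syndetic* if there is a compact set
`K ⊆ T` such that `K·t` meets `B` for every `t ∈ T`. -/
def Syndetic {T : Type*} [Monoid T] [TopologicalSpace T] (B : Set T) : Prop :=
  ∃ K : Set T, IsCompact K ∧ ∀ t : T, ∃ k ∈ K, k * t ∈ B

/-- The hitting-time set `N_T(U,V) = {t ∈ T : ∃ x ∈ U, t • x ∈ V}`. -/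
def HittingTimes (T : Type*) {X : Type*} [Monoid T] [MulAction T X] (U V : Set X) : Set T :=
  {t : T | ∃ x ∈ U, t • x ∈ V}

section DichotomyAux

set_option linter.unusedSectionVars false

variable {T X : Type*} [CommMonoid T] [TopologicalSpace T] [ContinuousMul T]
  [UniformSpace X] [CompactSpace X] [T2Space X] [MulAction T X] [ContinuousSMul T X]

/-- A symmetric entourage whose three-fold composition lands in `s`. -/
private lemma dich_comp3 {s : Set (X × X)} (hs : s ∈ 𝓤 X) :
    ∃ t ∈ 𝓤 X, SetRel.IsSymm t ∧
      ∀ a b c d : X, (a, b) ∈ t → (b, c) ∈ t → (c, d) ∈ t → (a, d) ∈ s := by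
  obtain ⟨u, hu, _, huc⟩ := comp_symm_mem_uniformity_sets hs
  obtain ⟨v, hv, hvs, hvc⟩ := comp_symm_mem_uniformity_sets hu
  refine ⟨v, hv, hvs, ?_⟩
  intro a b c d hab hbc hcd
  have hac : (a, c) ∈ u := hvc ⟨b, hab, hbc⟩
  have hcd' : (c, d) ∈ u := hvc ⟨c, refl_mem_uniformity hv, hcd⟩
  exact huc ⟨c, hac, hcd'⟩

/-- A closed symmetric entourage inside `s`. -/
private lemma dich_closed_symm {s : Set (X × X)} (hs : s ∈ 𝓤 X) :
    ∃ t ∈ 𝓤 X, IsClosed t ∧ SetRel.IsSymm t ∧ t ⊆ s := by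
  obtain ⟨c, hc, hccl, hcs⟩ := mem_uniformity_isClosed hs
  have hswap : Prod.swap ⁻¹' c ∈ 𝓤 X := mem_map.1 (tendsto_swap_uniformity hc)
  refine ⟨c ∩ Prod.swap ⁻¹' c, inter_mem hc hswap,
    hccl.inter (hccl.preimage continuous_swap), ?_, fun p hp => hcs hp.1⟩
  exact ⟨fun a b h => ⟨h.2, h.1⟩⟩

/-- Uniform equicontinuity of the compact family of maps `{k • · : k ∈ K}`. -/
private lemma dich_kequi {K : Set T} (hK : IsCompact K) {α : Set (X × X)} (hα : α ∈ 𝓤 X) :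
    ∃ γ ∈ 𝓤 X, ∀ p q : X, (p, q) ∈ γ → ∀ k ∈ K, (k • p, k • q) ∈ α := by
  obtain ⟨α₁, hα₁u, hα₁s, hα₁c⟩ := comp_symm_mem_uniformity_sets hα
  have hint : interior α₁ ∈ 𝓤 X := interior_mem_uniformity hα₁u
  have point : ∀ x : X, ∃ U : Set X, IsOpen U ∧ x ∈ U ∧
      ∀ k ∈ K, ∀ u ∈ U, ∀ u' ∈ U, (k • u, k • u') ∈ α := by
    intro x
    have hOP : ∀ k : T, ∃ O : Set T, ∃ P : Set X, IsOpen O ∧ k ∈ O ∧ IsOpen P ∧ x ∈ P ∧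
        ∀ k' ∈ O, ∀ u ∈ P, (k • x, k' • u) ∈ α₁ := by
      intro k
      have hc : Continuous fun q : T × X => ((k • x : X), q.1 • q.2) :=
        continuous_const.prodMk continuous_smul
      have hopen : IsOpen {q : T × X | ((k • x : X), q.1 • q.2) ∈ interior α₁} :=
        isOpen_interior.preimage hc
      have hmem : (k, x) ∈ {q : T × X | ((k • x : X), q.1 • q.2) ∈ interior α₁} :=
        refl_mem_uniformity hint
      obtain ⟨O, P, hO, hP, hkO, hxP, hsub⟩ := isOpen_prod_iff.mp hopen k x hmem
      exact ⟨O, P, hO, hkO, hP, hxP, fun k' hk' u hu =>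
        interior_subset (hsub (Set.mk_mem_prod hk' hu))⟩
    choose O P hOo hkO hPo hxP hgood using hOP
    obtain ⟨tF, htF⟩ := hK.elim_finite_subcover O hOo fun k hk => Set.mem_iUnion.2 ⟨k, hkO k⟩
    refine ⟨⋂ k ∈ tF, P k, isOpen_biInter_finset fun k _ => hPo k,
      Set.mem_biInter fun k _ => hxP k, ?_⟩
    intro k hk u hu u' hu'
    obtain ⟨k₀, hk₀F, hkO₀⟩ := Set.mem_iUnion₂.1 (htF hk)
    have h1 : (k₀ • x, k • u) ∈ α₁ := hgood k₀ k hkO₀ u (Set.mem_iInter₂.1 hu k₀ hk₀F)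
    have h2 : (k₀ • x, k • u') ∈ α₁ := hgood k₀ k hkO₀ u' (Set.mem_iInter₂.1 hu' k₀ hk₀F)
    exact hα₁c ⟨k₀ • x, hα₁s.symm _ _ h1, h2⟩
  choose U hUo hxU hUg using point
  obtain ⟨γ, hγu, hγ⟩ := lebesgue_number_lemma isCompact_univ hUo
    fun x _ => Set.mem_iUnion.2 ⟨x, hxU x⟩
  refine ⟨γ, hγu, ?_⟩
  intro p q hpq k hk
  obtain ⟨i, hi⟩ := hγ p (Set.mem_univ p)
  exact hUg i k hk p (hi (UniformSpace.mem_ball_self p hγu)) q (hi hpq)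

/-- From non-sensitivity: at every scale there is a nonempty open set all of whose pairs stay
close at all times. -/
private lemma dich_stable
    (hns : ∀ ε ∈ 𝓤 X, ∃ x : X, ∃ V ∈ 𝓝 x, ∀ y ∈ V, ∀ t : T, (t • x, t • y) ∈ ε)
    {α : Set (X × X)} (hα : α ∈ 𝓤 X) :
    ∃ Z : Set X, IsOpen Z ∧ Z.Nonempty ∧
      ∀ (t : T) (z z' : X), z ∈ Z → z' ∈ Z → (t • z, t • z') ∈ α := by
  obtain ⟨η, hηu, hηs, hηc⟩ := comp_symm_mem_uniformity_sets hα
  obtain ⟨x₀, V, hV, hst⟩ := hns η hηu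
  refine ⟨interior V, isOpen_interior, ⟨x₀, mem_interior_iff_mem_nhds.2 hV⟩, ?_⟩
  intro t z z' hz hz'
  have h1 : (t • x₀, t • z) ∈ η := hst z (interior_subset hz) t
  have h2 : (t • x₀, t • z') ∈ η := hst z' (interior_subset hz') t
  exact hηc ⟨t • x₀, hηs.symm _ _ h1, h2⟩

/-- Syndetic transitivity together with non-sensitivity forces minimality. -/
private lemma dich_minimal
    (hsynd : ∀ U V : Set X, IsOpen U → U.Nonempty → IsOpen V → V.Nonempty →
      Syndetic (HittingTimes T U V))
    (hns : ∀ ε ∈ 𝓤 X, ∃ x : X, ∃ V ∈ 𝓝 x, ∀ y ∈ V, ∀ t : T, (t • x, t • y) ∈ ε) :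
    ∀ x : X, Dense (MulAction.orbit T x) := by
  intro x
  by_contra hd
  rw [dense_iff_closure_eq] at hd
  obtain ⟨w, hw⟩ := (Set.ne_univ_iff_exists_notMem _).1 hd
  set Y := closure (MulAction.orbit T x) with hYdef
  have hYinv : ∀ (t : T), ∀ y ∈ Y, t • y ∈ Y := by
    intro t y hy
    have h1 : (t • ·) '' Y ⊆ closure ((t • ·) '' MulAction.orbit T x) :=
      image_closure_subset_closure_image (continuous_const_smul t)
    have h2 : (t • ·) '' MulAction.orbit T x ⊆ MulAction.orbit T x := by
      rintro _ ⟨_, ⟨r, rfl⟩, rfl⟩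
      exact ⟨t * r, by simp [mul_smul]⟩
    exact closure_mono h2 (h1 ⟨y, hy, rfl⟩)
  have hWo : IsOpen Yᶜ := isClosed_closure.isOpen_compl
  obtain ⟨α₀, hα₀u, hball⟩ := UniformSpace.mem_nhds_iff.1 (hWo.mem_nhds hw)
  obtain ⟨α, hαu, hαs, hα3⟩ := dich_comp3 hα₀u
  obtain ⟨Z, hZo, hZne, hZst⟩ := dich_stable hns hαu
  obtain ⟨α₂, hα₂u, hα₂o, hα₂sub⟩ : ∃ s ∈ 𝓤 X, IsOpen s ∧ s ⊆ α :=
    ⟨interior α, interior_mem_uniformity hαu, isOpen_interior, interior_subset⟩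
  set W' : Set X := (fun p : X => ((w : X), p)) ⁻¹' α₂ with hW'def
  have hW'o : IsOpen W' := hα₂o.preimage (continuous_const.prodMk continuous_id)
  have hW'ne : W'.Nonempty := ⟨w, refl_mem_uniformity hα₂u⟩
  obtain ⟨K, hKc, hKs⟩ := hsynd Z W' hZo hZne hW'o hW'ne
  obtain ⟨γ, hγu, hγ⟩ := dich_kequi hKc hαu
  obtain ⟨γ₂, hγ₂u, hγ₂o, hγ₂sub⟩ : ∃ s ∈ 𝓤 X, IsOpen s ∧ s ⊆ γ :=
    ⟨interior γ, interior_mem_uniformity hγu, isOpen_interior, interior_subset⟩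
  set G : Set X := ⋃ y ∈ Y, (fun p : X => (y, p)) ⁻¹' γ₂ with hGdef
  have hGo : IsOpen G :=
    isOpen_biUnion fun y _ => hγ₂o.preimage (continuous_const.prodMk continuous_id)
  have hxY : x ∈ Y := subset_closure (MulAction.mem_orbit_self x)
  have hGne : G.Nonempty := ⟨x, Set.mem_biUnion hxY (refl_mem_uniformity hγ₂u)⟩
  obtain ⟨K₂, _, hK₂s⟩ := hsynd Z G hZo hZne hGo hGne
  obtain ⟨k₂, _, hk₂⟩ := hK₂s 1
  obtain ⟨z₁, hz₁Z, hz₁G⟩ := (hk₂ : ∃ z ∈ Z, (k₂ * 1) • z ∈ G)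
  obtain ⟨y, hyY, hyγ⟩ := Set.mem_iUnion₂.1 hz₁G
  obtain ⟨k, hkK, hkN⟩ := hKs (k₂ * 1)
  obtain ⟨z₂, hz₂Z, hz₂W⟩ := (hkN : ∃ z ∈ Z, (k * (k₂ * 1)) • z ∈ W')
  have c1 : (w, (k * (k₂ * 1)) • z₂) ∈ α := hα₂sub hz₂W
  have c2 : ((k * (k₂ * 1)) • z₂, (k * (k₂ * 1)) • z₁) ∈ α :=
    hZst (k * (k₂ * 1)) z₂ z₁ hz₂Z hz₁Z
  have c3' : (k • y, k • ((k₂ * 1) • z₁)) ∈ α := hγ y ((k₂ * 1) • z₁) (hγ₂sub hyγ) k hkK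
  have c3 : ((k * (k₂ * 1)) • z₁, k • y) ∈ α := by
    rw [mul_smul]; exact hαs.symm _ _ c3'
  have hfin : (w, k • y) ∈ α₀ := hα3 _ _ _ _ c1 c2 c3
  exact (hball hfin) (hYinv k y hyY)

/-- In a minimal system a finite set of times carries every point into a fixed nonempty
open set. -/
private lemma dich_cover (hmin : ∀ x : X, Dense (MulAction.orbit T x))
    {W : Set X} (hWo : IsOpen W) (hWne : W.Nonempty) :
    ∃ F : Finset T, ∀ p : X, ∃ σ ∈ F, σ • p ∈ W := by
  have hcov : (Set.univ : Set X) ⊆ ⋃ σ : T, (σ • ·) ⁻¹' W := by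
    intro p _
    obtain ⟨z, hzorb, hzW⟩ := (hmin p).exists_mem_open hWo hWne
    obtain ⟨σ, rfl⟩ := hzorb
    exact Set.mem_iUnion.2 ⟨σ, hzW⟩
  obtain ⟨F, hF⟩ := isCompact_univ.elim_finite_subcover _
    (fun σ : T => hWo.preimage (continuous_const_smul σ)) hcov
  refine ⟨F, fun p => ?_⟩
  obtain ⟨σ, hσF, hσ⟩ := Set.mem_iUnion₂.1 (hF (Set.mem_univ p))
  exact ⟨σ, hσF, hσ⟩

/-- Uniform almost periodicity: syndetically many times act `ε₁`-close to the identity,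
uniformly on `X`. -/
private lemma dich_uap (hmin : ∀ x : X, Dense (MulAction.orbit T x))
    (hns : ∀ ε ∈ 𝓤 X, ∃ x : X, ∃ V ∈ 𝓝 x, ∀ y ∈ V, ∀ t : T, (t • x, t • y) ∈ ε)
    {ε₁ : Set (X × X)} (hε₁u : ε₁ ∈ 𝓤 X) (hcl : IsClosed ε₁) (hsym : SetRel.IsSymm ε₁) :
    ∃ F : Finset T, ∀ t : T, ∃ σ ∈ F, ∀ z : X, ((σ * t) • z, z) ∈ ε₁ := by
  obtain ⟨x₀, V, hV, hst⟩ := hns ε₁ hε₁u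
  have hx₀V₀ : x₀ ∈ interior V := mem_interior_iff_mem_nhds.2 hV
  obtain ⟨F, hF⟩ := dich_cover hmin isOpen_interior ⟨x₀, hx₀V₀⟩
  refine ⟨F, fun t => ?_⟩
  obtain ⟨σ, hσF, hσ⟩ := hF (t • x₀)
  have hσ' : (σ * t) • x₀ ∈ V := interior_subset (by rwa [mul_smul])
  refine ⟨σ, hσF, fun z => ?_⟩
  have hQc : IsClosed {z : X | ((σ * t) • z, z) ∈ ε₁} :=
    hcl.preimage ((continuous_const_smul (σ * t)).prodMk continuous_id)
  have horb : MulAction.orbit T x₀ ⊆ {z : X | ((σ * t) • z, z) ∈ ε₁} := by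
    rintro _ ⟨r, rfl⟩
    have key : (σ * t) • r • x₀ = r • ((σ * t) • x₀) := by
      rw [smul_smul, smul_smul, mul_comm]
    have hmem : (r • x₀, r • ((σ * t) • x₀)) ∈ ε₁ := hst _ hσ' r
    have : ((σ * t) • r • x₀, r • x₀) ∈ ε₁ := by
      rw [key]; exact hsym.symm _ _ hmem
    exact this
  have huniv : (Set.univ : Set X) ⊆ {z : X | ((σ * t) • z, z) ∈ ε₁} := by
    rw [← (hmin x₀).closure_eq]
    exact hQc.closure_subset_iff.2 horb
  exact huniv (Set.mem_univ z)

/-- Uniform continuity of a finite family of times. -/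
private lemma dich_finunif (F : Finset T) {α : Set (X × X)} (hα : α ∈ 𝓤 X) :
    ∃ β ∈ 𝓤 X, ∀ u v : X, (u, v) ∈ β → ∀ σ ∈ F, (σ • u, σ • v) ∈ α := by
  have h : ∀ σ : T, {p : X × X | (σ • p.1, σ • p.2) ∈ α} ∈ 𝓤 X := fun σ =>
    uniformContinuous_def.1
      (CompactSpace.uniformContinuous_of_continuous (continuous_const_smul σ)) α hα
  refine ⟨⋂ σ ∈ F, {p : X × X | (σ • p.1, σ • p.2) ∈ α},
    (Filter.biInter_finset_mem F).2 fun σ _ => h σ, ?_⟩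
  intro u v huv σ hσF
  exact Set.mem_iInter₂.1 huv σ hσF

end DichotomyAux

/-- Dichotomy theorem for abelian semigroup actions: a syndetically transitive topological
semiflow on a compact Hausdorff space with an abelian topological phase monoid is either
minimal and equicontinuous, or sensitive to initial conditions. -/
theorem dichotomy_syndetically_transitive_abelian
    {T X : Type*} [CommMonoid T] [TopologicalSpace T] [ContinuousMul T]
    [UniformSpace X] [CompactSpace X] [T2Space X] [MulAction T X] [ContinuousSMul T X]
    (hsynd : ∀ U V : Set X, IsOpen U → U.Nonempty → IsOpen V → V.Nonempty →
      Syndetic (HittingTimes T U V)) :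
    ((∀ x : X, Dense (MulAction.orbit T x)) ∧
      (∀ ε ∈ 𝓤 X, ∃ δ ∈ 𝓤 X, ∀ x y : X, (x, y) ∈ δ → ∀ t : T, (t • x, t • y) ∈ ε)) ∨
    (∃ ε ∈ 𝓤 X, ∀ x : X, ∀ V ∈ 𝓝 x, ∃ y ∈ V, ∃ t : T, (t • x, t • y) ∉ ε) := by
  by_cases hsens : ∃ ε ∈ 𝓤 X, ∀ x : X, ∀ V ∈ 𝓝 x, ∃ y ∈ V, ∃ t : T, (t • x, t • y) ∉ ε
  · exact Or.inr hsens
  · left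
    push_neg at hsens
    have hns : ∀ ε ∈ 𝓤 X, ∃ x : X, ∃ V ∈ 𝓝 x, ∀ y ∈ V, ∀ t : T, (t • x, t • y) ∈ ε := hsens
    have hmin : ∀ x : X, Dense (MulAction.orbit T x) := dich_minimal hsynd hns
    refine ⟨hmin, ?_⟩
    intro ε hε
    obtain ⟨tε, htεu, htεs, htε3⟩ := dich_comp3 hε
    obtain ⟨ε₁, hε₁u, hε₁cl, hε₁sym, hε₁sub⟩ := dich_closed_symm htεu
    obtain ⟨F₁, hF₁⟩ := dich_uap hmin hns hε₁u hε₁cl hε₁sym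
    obtain ⟨β, hβu, hβ⟩ := dich_finunif F₁ hε₁u
    obtain ⟨β₂, hβ₂u, hβ₂s, hβ₂3⟩ := dich_comp3 hβu
    obtain ⟨ε₂, hε₂u, hε₂cl, hε₂sym, hε₂sub⟩ := dich_closed_symm hβ₂u
    obtain ⟨F₂, hF₂⟩ := dich_uap hmin hns hε₂u hε₂cl hε₂sym
    refine ⟨β₂, hβ₂u, ?_⟩
    intro x y hxy t
    obtain ⟨σ₁, _, h1⟩ := hF₂ t
    have hax : (σ₁ • (t • x), x) ∈ ε₂ := by have := h1 x; rwa [mul_smul] at this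
    have hby : (σ₁ • (t • y), y) ∈ ε₂ := by have := h1 y; rwa [mul_smul] at this
    have hab : (σ₁ • (t • x), σ₁ • (t • y)) ∈ β :=
      hβ₂3 _ _ _ _ (hε₂sub hax) hxy (hε₂sub (hε₂sym.symm _ _ hby))
    obtain ⟨σ₂, hσ₂F, h2⟩ := hF₁ σ₁
    have hmid : (σ₂ • (σ₁ • (t • x)), σ₂ • (σ₁ • (t • y))) ∈ ε₁ := hβ _ _ hab σ₂ hσ₂F
    have hL : (t • x, σ₂ • (σ₁ • (t • x))) ∈ ε₁ := by
      have := h2 (t • x); rw [mul_smul] at this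
      exact hε₁sym.symm _ _ this
    have hR : (σ₂ • (σ₁ • (t • y)), t • y) ∈ ε₁ := by
      have := h2 (t • y); rwa [mul_smul] at this
    exact htε3 _ _ _ _ (hε₁sub hL) (hε₁sub hmid) (hε₁sub hR)
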